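/- Let λ ⊆ μ be partitions and s ≥ 1 an integer. Then μ∖λ is a border strip of size s if and only if there exists c ∈ ℤ such that m(λ)(c−1) = +1, m(λ)(c+s−1) = −1, m(μ)(c−1) = −1, m(μ)(c+s−1) = +1, and m(μ)(j) = m(λ)(j) for every j ∉ {c−1, c+s−1}. In that case the contents of the nodes of μ∖λ are exactly the integers c, c+1, …, c+s−1, each occurring for exactly one node of μ∖λ. -/

import Mathlib

/-- A partition: a weakly decreasing, eventually zero sequence of naturals;
`part k` is the `(k+1)`-st part `λ_{k+1}`. -/
structure NatSeqPartition where
  part : ℕ → ℕ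
  antitone : ∀ a b : ℕ, a ≤ b → part b ≤ part a
  eventually_zero : ∃ N, ∀ n, N ≤ n → part n = 0

namespace Wreath

attribute [local instance] Classical.propDecidable

/-- The conjugate partition: `conj lam a = ᵗλ_a` for `a ≥ 1`. -/
noncomputable def conj (lam : NatSeqPartition) (a : ℕ) : ℕ :=
  Set.ncard {k : ℕ | a ≤ lam.part k}

/-- The Maya diagram of a partition: value `+1` at `j` iff `j = ᵗλ_a − a` for some `a ≥ 1`. -/
noncomputable def mayaFun (lam : NatSeqPartition) : ℤ → ℤ := fun j =>
  if ∃ a : ℕ, j = (conj lam (a + 1) : ℤ) - (a + 1 : ℤ) then 1 else -1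

/-- `f : ℤ → ℤ` is a Maya diagram: values `±1`, eventually `-1` to the right (large `j`),
eventually `+1` to the left (small `j`). -/
def IsMayaFun (f : ℤ → ℤ) : Prop :=
  (∀ j, f j = 1 ∨ f j = -1) ∧ (∃ N : ℤ, ∀ j, N ≤ j → f j = -1) ∧
    (∃ N : ℤ, ∀ j, j ≤ N → f j = 1)

/-- The charge `#{j < 0 : f j = −1} − #{j ≥ 0 : f j = 1}`. -/
noncomputable def chargeFun (f : ℤ → ℤ) : ℤ :=
  (Set.ncard {j : ℤ | j < 0 ∧ f j = -1} : ℤ) - (Set.ncard {j : ℤ | 0 ≤ j ∧ f j = 1} : ℤ)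

def emptyPartition : NatSeqPartition :=
  ⟨fun _ => 0, fun _ _ _ => le_rfl, ⟨0, fun _ _ => rfl⟩⟩

/-- The partition whose Maya diagram is `f` (junk value if there is none). -/
noncomputable def partitionOfMaya (f : ℤ → ℤ) : NatSeqPartition :=
  if h : ∃ lam : NatSeqPartition, mayaFun lam = f then h.choose else emptyPartition

/-- The charge `c_i(λ)` of the `i`-th quotient Maya diagram `j ↦ m(λ)(i + jℓ)`. -/
noncomputable def chargeQuot (ℓ : ℕ) (lam : NatSeqPartition) (i : ℤ) : ℤ :=
  chargeFun fun j => mayaFun lam (i + j * (ℓ : ℤ))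

/-- The `i`-th quotient component `λ^i`: the partition whose Maya diagram is
`j ↦ m_i(λ)(j − c_i(λ))`. -/
noncomputable def quotComp (ℓ : ℕ) (lam : NatSeqPartition) (i : ℤ) : NatSeqPartition :=
  partitionOfMaya fun j => mayaFun lam (i + (j - chargeQuot ℓ lam i) * (ℓ : ℤ))

/-- The `ℓ`-core of `λ`: the partition whose Maya diagram has value `−1` at `i + jℓ`
(`0 ≤ i < ℓ`) exactly when `j ≥ −c_i(λ)`. -/
noncomputable def coreOf (ℓ : ℕ) (lam : NatSeqPartition) : NatSeqPartition :=
  partitionOfMaya fun j =>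
    if -(chargeQuot ℓ lam (Int.emod j (ℓ : ℤ))) ≤ Int.ediv j (ℓ : ℤ) then -1 else 1

/-- Membership of the node `x = (a,b)` in the Young diagram of `lam`:
`1 ≤ a`, `1 ≤ b`, `a ≤ λ_b`.  The content of `(a,b)` is `b − a`. -/
def NatSeqPartition.memYD (lam : NatSeqPartition) (x : ℤ × ℤ) : Prop :=
  1 ≤ x.1 ∧ 1 ≤ x.2 ∧ x.1 ≤ (lam.part (x.2 - 1).toNat : ℤ)

/-- Containment of Young diagrams. -/
def Sub (lam mu : NatSeqPartition) : Prop := ∀ x, NatSeqPartition.memYD lam x → NatSeqPartition.memYD mu x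

/-- Membership in the skew diagram `μ∖λ`. -/
def SkewMem (lam mu : NatSeqPartition) (x : ℤ × ℤ) : Prop :=
  NatSeqPartition.memYD mu x ∧ ¬ NatSeqPartition.memYD lam x

/-- The number of nodes of `μ∖λ`. -/
noncomputable def skewSize (lam mu : NatSeqPartition) : ℕ := Set.ncard {x | SkewMem lam mu x}

/-- The size `|λ|`. -/
noncomputable def NatSeqPartition.size (lam : NatSeqPartition) : ℕ := Set.ncard {x | NatSeqPartition.memYD lam x}

/-- Edge-adjacency of nodes. -/
def adjacent (x y : ℤ × ℤ) : Prop :=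
  (x.1 = y.1 ∧ (x.2 = y.2 + 1 ∨ y.2 = x.2 + 1)) ∨
  (x.2 = y.2 ∧ (x.1 = y.1 + 1 ∨ y.1 = x.1 + 1))

/-- `μ∖λ` is a border strip: `λ ⊆ μ`, nonempty, connected through edge-adjacent nodes,
and containing no 2×2 block. -/
def IsBorderStrip (lam mu : NatSeqPartition) : Prop :=
  Sub lam mu ∧ (∃ x, SkewMem lam mu x) ∧
  (∀ x y, SkewMem lam mu x → SkewMem lam mu y →
    Relation.ReflTransGen (fun u v => SkewMem lam mu u ∧ SkewMem lam mu v ∧ adjacent u v) x y) ∧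
  ¬ ∃ a b : ℤ, SkewMem lam mu (a, b) ∧ SkewMem lam mu (a + 1, b) ∧
      SkewMem lam mu (a, b + 1) ∧ SkewMem lam mu (a + 1, b + 1)

/-- An `ℓ`-core: a partition from which no border strip of `ℓ` nodes can be removed. -/
def IsCore (ℓ : ℕ) (lam : NatSeqPartition) : Prop :=
  ¬ ∃ mu : NatSeqPartition, IsBorderStrip mu lam ∧ skewSize mu lam = ℓ

/-- Dominance order (on partitions of the same size): `Dom μ λ` means `μ ⊴ λ`. -/
def Dom (mu lam : NatSeqPartition) : Prop :=
  NatSeqPartition.size mu = NatSeqPartition.size lam ∧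
  ∀ k : ℕ, ∑ b ∈ Finset.range k, mu.part b ≤ ∑ b ∈ Finset.range k, lam.part b

/-- `x` is the node of `μ∖λ` of largest content (the initial node of a strip). -/
def IsMaxContentNode (lam mu : NatSeqPartition) (x : ℤ × ℤ) : Prop :=
  SkewMem lam mu x ∧ ∀ y, SkewMem lam mu y → y.2 - y.1 ≤ x.2 - x.1

/-- `x` is the node of `μ∖λ` of smallest content (the final node of a strip). -/
def IsMinContentNode (lam mu : NatSeqPartition) (x : ℤ × ℤ) : Prop :=
  SkewMem lam mu x ∧ ∀ y, SkewMem lam mu y → x.2 - x.1 ≤ y.2 - y.1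

/-- Add `1` to each of the first `k` parts (append a column of height `k`). -/
def addColParts (k : ℕ) (f : ℕ → ℕ) : ℕ → ℕ := fun r => if r < k then f r + 1 else f r

/-- The number of (nonzero) rows of a partition. -/
noncomputable def numRows (nu : NatSeqPartition) : ℕ := Set.ncard {r : ℕ | 0 < nu.part r}

/-- Append a new final row of length `k` after `len` rows. -/
def addRowParts (k len : ℕ) (f : ℕ → ℕ) : ℕ → ℕ :=
  fun r => if r < len then f r else if r = len then k else 0

/-- One column-addition step: `μ` is obtained from `ν` by adding, in component `i` of the
`ℓ`-quotient, a new column of height `k` no taller than any existing column. -/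
def IsColStep (ℓ : ℕ) (nu mu : NatSeqPartition) (i k : ℕ) : Prop :=
  i < ℓ ∧ 1 ≤ k ∧
  (∀ a : ℕ, 1 ≤ a → (a : ℕ) ≤ (quotComp ℓ nu (i : ℤ)).part 0 →
    k ≤ conj (quotComp ℓ nu (i : ℤ)) a) ∧
  coreOf ℓ mu = coreOf ℓ nu ∧
  (∀ i' : ℕ, i' < ℓ → i' ≠ i → quotComp ℓ mu (i' : ℤ) = quotComp ℓ nu (i' : ℤ)) ∧
  (quotComp ℓ mu (i : ℤ)).part = addColParts k ((quotComp ℓ nu (i : ℤ)).part)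

/-- One row-addition step: `μ` is obtained from `ν` by adding, in component `i` of the
`ℓ`-quotient, a new final row of length `k` no longer than any existing row. -/
def IsRowStep (ℓ : ℕ) (nu mu : NatSeqPartition) (i k : ℕ) : Prop :=
  i < ℓ ∧ 1 ≤ k ∧
  (∀ r : ℕ, 0 < (quotComp ℓ nu (i : ℤ)).part r → k ≤ (quotComp ℓ nu (i : ℤ)).part r) ∧
  coreOf ℓ mu = coreOf ℓ nu ∧
  (∀ i' : ℕ, i' < ℓ → i' ≠ i → quotComp ℓ mu (i' : ℤ) = quotComp ℓ nu (i' : ℤ)) ∧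
  (quotComp ℓ mu (i : ℤ)).part =
    addRowParts k (numRows (quotComp ℓ nu (i : ℤ))) ((quotComp ℓ nu (i : ℤ)).part)

/-- A column-addition sequence for `λ`. -/
def IsColSeq (ℓ : ℕ) (lam : NatSeqPartition) (N : ℕ) (seq : ℕ → NatSeqPartition) : Prop :=
  seq 0 = coreOf ℓ lam ∧ seq N = lam ∧
  ∀ t, t < N → ∃ i k, IsColStep ℓ (seq t) (seq (t + 1)) i k

/-- A row-addition sequence for `λ`. -/
def IsRowSeq (ℓ : ℕ) (lam : NatSeqPartition) (N : ℕ) (seq : ℕ → NatSeqPartition) : Prop :=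
  seq 0 = coreOf ℓ lam ∧ seq N = lam ∧
  ∀ t, t < N → ∃ i k, IsRowStep ℓ (seq t) (seq (t + 1)) i k

/-- Left-to-right order on a column-addition sequence: for `1 ≤ r < s ≤ N` the content of the
initial node of the `r`-th strip is strictly greater than the content of the final node of the
`s`-th strip. -/
def LeftToRight (N : ℕ) (seq : ℕ → NatSeqPartition) : Prop :=
  ∀ r s, 1 ≤ r → r < s → s ≤ N → ∀ x y,
    IsMaxContentNode (seq (r - 1)) (seq r) x →
    IsMinContentNode (seq (s - 1)) (seq s) y →
    y.2 - y.1 < x.2 - x.1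

/-- Right-to-left order on a row-addition sequence: for `1 ≤ r < s ≤ N` the content of the
final node of the `r`-th strip is strictly less than the content of the final node of the
`s`-th strip. -/
def RightToLeft (N : ℕ) (seq : ℕ → NatSeqPartition) : Prop :=
  ∀ r s, 1 ≤ r → r < s → s ≤ N → ∀ x y,
    IsMinContentNode (seq (r - 1)) (seq r) x →
    IsMinContentNode (seq (s - 1)) (seq s) y →
    x.2 - x.1 < y.2 - y.1

/-- `x` is an addable node of `λ`. -/
def Addable (lam : NatSeqPartition) (x : ℤ × ℤ) : Prop :=
  ¬ NatSeqPartition.memYD lam x ∧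
    ∃ mu : NatSeqPartition, ∀ y, NatSeqPartition.memYD mu y ↔ (NatSeqPartition.memYD lam y ∨ y = x)

/-- `x` is a removable node of `λ`. -/
def Removable (lam : NatSeqPartition) (x : ℤ × ℤ) : Prop :=
  NatSeqPartition.memYD lam x ∧
    ∃ mu : NatSeqPartition, ∀ y, NatSeqPartition.memYD mu y ↔ (NatSeqPartition.memYD lam y ∧ y ≠ x)

end Wreath

namespace Wreath
attribute [local instance] Classical.propDecidable

lemma downset_mem_iff {S : Set ℕ} (hfin : S.Finite)
    (hdc : ∀ m n, m ≤ n → n ∈ S → m ∈ S) (k : ℕ) : k ∈ S ↔ k < S.ncard := by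
  constructor
  · intro hk
    have hsub : Set.Iic k ⊆ S := fun m hm => hdc m k hm hk
    have := Set.ncard_le_ncard hsub hfin
    have : (Set.Iic k).ncard = k + 1 := by
      rw [← Finset.coe_Iic, Set.ncard_coe_finset, Nat.card_Iic]
    omega
  · intro hk
    by_contra hnk
    have hsub : S ⊆ Set.Iio k := by
      intro n hn
      by_contra hnn
      simp only [Set.mem_Iio, not_lt] at hnn
      exact hnk (hdc k n hnn hn)
    have := Set.ncard_le_ncard hsub (Set.finite_Iio k)
    have : (Set.Iio k).ncard = k := by
      rw [← Finset.coe_Iio, Set.ncard_coe_finset, Nat.card_Iio]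
    omega

lemma conj_set_finite (lam : NatSeqPartition) {a : ℕ} (ha : 1 ≤ a) :
    {k : ℕ | a ≤ lam.part k}.Finite := by
  obtain ⟨N, hN⟩ := lam.eventually_zero
  apply (Set.finite_Iio N).subset
  intro k hk
  simp only [Set.mem_setOf_eq] at hk
  by_contra h
  have := hN k (by simpa [Set.mem_Iio] using h)
  omega

lemma le_part_iff (lam : NatSeqPartition) {a b : ℕ} (ha : 1 ≤ a) :
    a ≤ lam.part b ↔ b < conj lam a := by
  exact (downset_mem_iff (conj_set_finite lam ha)
    (fun m n hmn hn => le_trans hn (lam.antitone m n hmn)) b).symm.symm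

lemma conj_anti (lam : NatSeqPartition) {a a' : ℕ} (ha : 1 ≤ a) (h : a ≤ a') :
    conj lam a' ≤ conj lam a :=
  Set.ncard_le_ncard (fun k hk => le_trans h hk) (conj_set_finite lam ha)

end Wreath

namespace Wreath
attribute [local instance] Classical.propDecidable

noncomputable def fB (lam : NatSeqPartition) (a : ℕ) : ℤ := (conj lam (a + 1) : ℤ) - (a + 1 : ℤ)

lemma fB_strictAnti (lam : NatSeqPartition) : StrictAnti (fB lam) := by
  apply strictAnti_nat_of_succ_lt
  intro n
  have := conj_anti lam (a := n + 1) (a' := n + 2) (by omega) (by omega)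
  unfold fB
  simp only [show n + 1 + 1 = n + 2 from rfl]
  push_cast
  omega

lemma maya_eq_one_iff (lam : NatSeqPartition) (j : ℤ) :
    mayaFun lam j = 1 ↔ ∃ a, fB lam a = j := by
  unfold mayaFun
  split_ifs with h
  · simp only [eq_self_iff_true, true_iff]
    obtain ⟨a, ha⟩ := h; exact ⟨a, ha.symm⟩
  · constructor
    · intro hc; norm_num at hc
    · rintro ⟨a, ha⟩; exact absurd ⟨a, ha.symm⟩ h

lemma maya_eq_neg_one_iff (lam : NatSeqPartition) (j : ℤ) :
    mayaFun lam j = -1 ↔ ¬ ∃ a, fB lam a = j := by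
  unfold mayaFun
  split_ifs with h
  · constructor
    · intro hc; norm_num at hc
    · intro hc; obtain ⟨a, ha⟩ := h; exact absurd ⟨a, ha.symm⟩ hc
  · simp only [eq_self_iff_true, true_iff]
    intro ⟨a, ha⟩; exact h ⟨a, ha.symm⟩

lemma maya_cases (lam : NatSeqPartition) (j : ℤ) : mayaFun lam j = 1 ∨ mayaFun lam j = -1 := by
  unfold mayaFun; split_ifs <;> simp

noncomputable def M (lam : NatSeqPartition) (d : ℤ) : ℕ := Set.ncard {a : ℕ | d ≤ fB lam a}

lemma Mset_finite (lam : NatSeqPartition) (d : ℤ) : {a : ℕ | d ≤ fB lam a}.Finite := by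
  apply (Set.finite_Icc 0 ((fB lam 0 - d).toNat)).subset
  intro a ha
  simp only [Set.mem_setOf_eq] at ha
  have h2 : fB lam a ≤ fB lam 0 - a := by
    have := (fB_strictAnti lam).antitone (Nat.zero_le a)
    have h3 : conj lam (a + 1) ≤ conj lam 1 := conj_anti lam le_rfl (by omega)
    unfold fB at *
    push_cast at *
    omega
  simp only [Set.mem_Icc]
  constructor
  · omega
  · omega

lemma M_succ (lam : NatSeqPartition) (d : ℤ) :
    M lam d = M lam (d + 1) + (if mayaFun lam d = 1 then 1 else 0) := by
  by_cases h : mayaFun lam d = 1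
  · obtain ⟨a0, ha0⟩ := (maya_eq_one_iff lam d).mp h
    have hset : {a : ℕ | d ≤ fB lam a} = insert a0 {a : ℕ | d + 1 ≤ fB lam a} := by
      ext a
      simp only [Set.mem_setOf_eq, Set.mem_insert_iff]
      constructor
      · intro hd
        rcases eq_or_lt_of_le hd with heq | hlt
        · left
          exact ((fB_strictAnti lam).injective (ha0.trans heq)).symm
        · right; omega
      · rintro (rfl | hd)
        · omega
        · omega
    rw [M, M, hset, Set.ncard_insert_of_notMem (by simp [Set.mem_setOf_eq]; omega)
      (Mset_finite lam (d+1)), if_pos h]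
  · have h2 := (maya_eq_neg_one_iff lam d).mp ((maya_cases lam d).resolve_left h)
    have hset : {a : ℕ | d ≤ fB lam a} = {a : ℕ | d + 1 ≤ fB lam a} := by
      ext a
      simp only [Set.mem_setOf_eq]
      constructor
      · intro hd
        rcases eq_or_lt_of_le hd with heq | hlt
        · exact absurd ⟨a, heq.symm⟩ h2
        · omega
      · intro hd; omega
    rw [M, M, hset, if_neg h, Nat.add_zero]

lemma M_zero (lam : NatSeqPartition) (d : ℤ) (hd : (conj lam 1 : ℤ) ≤ d) : M lam d = 0 := by
  rw [M, Set.ncard_eq_zero (Mset_finite lam d)]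
  ext a
  simp only [Set.mem_setOf_eq, Set.mem_empty_iff_false, iff_false, not_le]
  have h3 : conj lam (a + 1) ≤ conj lam 1 := conj_anti lam le_rfl (by omega)
  unfold fB
  push_cast
  omega

end Wreath

namespace Wreath
attribute [local instance] Classical.propDecidable

lemma memYD_iff (lam : NatSeqPartition) (x : ℤ × ℤ) :
    NatSeqPartition.memYD lam x ↔ 1 ≤ x.1 ∧ 1 ≤ x.2 ∧ x.2 ≤ (conj lam x.1.toNat : ℤ) := by
  unfold NatSeqPartition.memYD
  by_cases h1 : 1 ≤ x.1
  · by_cases h2 : 1 ≤ x.2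
    · simp only [h1, h2, true_and]
      have key := le_part_iff lam (a := x.1.toNat) (b := (x.2 - 1).toNat) (by omega)
      constructor
      · intro h3
        have : x.1.toNat ≤ lam.part (x.2 - 1).toNat := by omega
        have := key.mp this
        omega
      · intro h3
        have : (x.2 - 1).toNat < conj lam x.1.toNat := by omega
        have := key.mpr this
        omega
    · simp only [h2, false_and, and_false, iff_false]
  · tauto

lemma memYD_mono_row (lam : NatSeqPartition) {p q q' : ℤ} (h : NatSeqPartition.memYD lam (p, q)) (h1 : 1 ≤ q')
    (h2 : q' ≤ q) : NatSeqPartition.memYD lam (p, q') := by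
  obtain ⟨ha, hb, hc⟩ := h
  refine ⟨ha, h1, le_trans hc ?_⟩
  exact_mod_cast lam.antitone _ _ (by omega)

lemma memYD_mono_col (lam : NatSeqPartition) {p p' q : ℤ} (h : NatSeqPartition.memYD lam (p, q)) (h1 : 1 ≤ p')
    (h2 : p' ≤ p) : NatSeqPartition.memYD lam (p', q) := by
  obtain ⟨ha, hb, hc⟩ := h
  exact ⟨h1, hb, le_trans h2 hc⟩

lemma nat_lt_set_eq (T : ℤ) : {a : ℕ | (a : ℤ) < T} = ↑(Finset.range T.toNat) := by
  ext a
  simp only [Set.mem_setOf_eq, Finset.coe_range, Set.mem_Iio]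
  omega

lemma nat_lt_finite (T : ℤ) : {a : ℕ | (a : ℤ) < T}.Finite := by
  rw [nat_lt_set_eq]; exact (Finset.range T.toNat).finite_toSet

lemma nat_lt_ncard (T : ℤ) : {a : ℕ | (a : ℤ) < T}.ncard = T.toNat := by
  rw [nat_lt_set_eq, Set.ncard_coe_finset, Finset.card_range]

lemma M_eq_diag (lam : NatSeqPartition) (d : ℤ) :
    M lam d = {x : ℤ × ℤ | NatSeqPartition.memYD lam x ∧ x.2 - x.1 = d}.ncard + (-d).toNat := by
  classical
  set A := {a : ℕ | 1 ≤ (a : ℤ) + 1 + d ∧ d ≤ fB lam a} with hA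
  set B := {a : ℕ | (a : ℤ) + 1 + d ≤ 0} with hB
  have hBsub : B = {a : ℕ | (a : ℤ) < -d} := by ext a; simp only [hB, Set.mem_setOf_eq]; omega
  have hBfin : B.Finite := by rw [hBsub]; exact nat_lt_finite _
  have hAfin : A.Finite := (Mset_finite lam d).subset (fun a ha => ha.2)
  have hunion : {a : ℕ | d ≤ fB lam a} = A ∪ B := by
    ext a
    simp only [hA, hB, Set.mem_setOf_eq, Set.mem_union]
    constructor
    · intro h
      by_cases h2 : 1 ≤ (a : ℤ) + 1 + d
      · exact Or.inl ⟨h2, h⟩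
      · right; omega
    · rintro (⟨h1, h2⟩ | h1)
      · exact h2
      · unfold fB
        have : (0 : ℤ) ≤ (conj lam (a + 1) : ℤ) := by positivity
        omega
  have hdisj : Disjoint A B := by
    rw [Set.disjoint_left]
    intro a ha hb
    simp only [hA, Set.mem_setOf_eq] at ha
    simp only [hB, Set.mem_setOf_eq] at hb
    omega
  have himg : {x : ℤ × ℤ | NatSeqPartition.memYD lam x ∧ x.2 - x.1 = d} =
      (fun a : ℕ => (((a : ℤ) + 1), ((a : ℤ) + 1 + d))) '' A := by
    ext x
    simp only [Set.mem_setOf_eq, Set.mem_image, hA]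
    constructor
    · rintro ⟨hm, hd⟩
      rw [memYD_iff] at hm
      obtain ⟨h1, h2, h3⟩ := hm
      refine ⟨(x.1 - 1).toNat, ⟨by omega, ?_⟩, ?_⟩
      · unfold fB
        have he : ((x.1 - 1).toNat + 1) = x.1.toNat := by omega
        rw [he]
        omega
      · have : ((x.1 - 1).toNat : ℤ) = x.1 - 1 := by omega
        rw [Prod.ext_iff]
        constructor <;> simp only [this] <;> omega
    · rintro ⟨a, ⟨h1, h2⟩, rfl⟩
      rw [memYD_iff]
      unfold fB at h2
      have he : ((a : ℤ) + 1).toNat = a + 1 := by omega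
      simp only [he]
      refine ⟨⟨by omega, h1, by push_cast; omega⟩, by ring⟩
  have hinj : Set.InjOn (fun a : ℕ => (((a : ℤ) + 1), ((a : ℤ) + 1 + d))) A := by
    intro a _ b _ hab
    simp only [Prod.mk.injEq] at hab
    omega
  rw [M, hunion, Set.ncard_union_eq hdisj hAfin hBfin, himg,
    Set.ncard_image_of_injOn hinj]
  congr 1
  rw [hBsub, nat_lt_ncard]

end Wreath

namespace Wreath
attribute [local instance] Classical.propDecidable

lemma YD_finite (lam : NatSeqPartition) : {x : ℤ × ℤ | NatSeqPartition.memYD lam x}.Finite := by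
  obtain ⟨N, hN⟩ := lam.eventually_zero
  apply (Set.finite_Icc ((1 : ℤ), (1 : ℤ)) ((lam.part 0 : ℤ), (N : ℤ))).subset
  rintro ⟨p, q⟩ ⟨h1, h2, h3⟩
  simp only at h1 h2 h3
  have hp : (lam.part (q - 1).toNat : ℤ) ≤ (lam.part 0 : ℤ) := by
    exact_mod_cast lam.antitone 0 _ (Nat.zero_le _)
  have hq : q ≤ N := by
    by_contra hq
    have : lam.part (q - 1).toNat = 0 := hN _ (by omega)
    rw [this] at h3
    simp at h3
    omega
  simp only [Set.mem_Icc, Prod.mk_le_mk]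
  exact ⟨⟨h1, h2⟩, ⟨by omega, hq⟩⟩

lemma skew_finite (lam mu : NatSeqPartition) : {x : ℤ × ℤ | SkewMem lam mu x}.Finite :=
  (YD_finite mu).subset (fun x hx => hx.1)

lemma Kset_eq (lam mu : NatSeqPartition) (d : ℤ) :
    {x : ℤ × ℤ | SkewMem lam mu x ∧ x.2 - x.1 = d} =
      {x : ℤ × ℤ | NatSeqPartition.memYD mu x ∧ x.2 - x.1 = d} \
        {x : ℤ × ℤ | NatSeqPartition.memYD lam x ∧ x.2 - x.1 = d} := by
  ext x
  simp only [Set.mem_setOf_eq, Set.mem_diff, SkewMem]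
  tauto

lemma M_add (lam mu : NatSeqPartition) (hsub : Sub lam mu) (d : ℤ) :
    M mu d = M lam d + {x : ℤ × ℤ | SkewMem lam mu x ∧ x.2 - x.1 = d}.ncard := by
  have hsubd : {x : ℤ × ℤ | NatSeqPartition.memYD lam x ∧ x.2 - x.1 = d} ⊆
      {x : ℤ × ℤ | NatSeqPartition.memYD mu x ∧ x.2 - x.1 = d} := by
    rintro x ⟨h1, h2⟩; exact ⟨hsub x h1, h2⟩
  have hfinL : {x : ℤ × ℤ | NatSeqPartition.memYD lam x ∧ x.2 - x.1 = d}.Finite :=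
    (YD_finite lam).subset (fun x hx => hx.1)
  have hfinM : {x : ℤ × ℤ | NatSeqPartition.memYD mu x ∧ x.2 - x.1 = d}.Finite :=
    (YD_finite mu).subset (fun x hx => hx.1)
  have hle := Set.ncard_le_ncard hsubd hfinM
  rw [M_eq_diag, M_eq_diag, Kset_eq, Set.ncard_diff hsubd hfinL]
  omega

lemma rect_lemma (lam mu : NatSeqPartition) {x y : ℤ × ℤ}
    (hx : SkewMem lam mu x) (hy : SkewMem lam mu y) (hd : x.2 - x.1 = y.2 - y.1)
    (hlt : x.1 < y.1) :
    SkewMem lam mu (x.1, x.2) ∧ SkewMem lam mu (x.1 + 1, x.2) ∧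
      SkewMem lam mu (x.1, x.2 + 1) ∧ SkewMem lam mu (x.1 + 1, x.2 + 1) := by
  obtain ⟨hmx, hlx⟩ := hx
  obtain ⟨hmy, hly⟩ := hy
  obtain ⟨hx1, hx2, hx3⟩ := hmx
  obtain ⟨hy1, hy2, hy3⟩ := hmy
  have hx2y : x.2 + 1 ≤ y.2 := by omega
  -- (x.1+1, x.2+1) ∈ mu
  have hc : NatSeqPartition.memYD mu (x.1 + 1, x.2 + 1) := by
    have h1 : NatSeqPartition.memYD mu (y.1, x.2 + 1) :=
      memYD_mono_row mu (p := y.1) (q := y.2) ⟨hy1, hy2, hy3⟩ (by omega) hx2y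
    exact memYD_mono_col mu h1 (by omega) (by omega)
  have hmu : ∀ p q : ℤ, x.1 ≤ p → p ≤ x.1 + 1 → x.2 ≤ q → q ≤ x.2 + 1 →
      NatSeqPartition.memYD mu (p, q) := by
    intro p q h1 h2 h3 h4
    exact memYD_mono_col mu (memYD_mono_row mu hc (by omega) (by omega)) (by omega) (by omega)
  have hlam : ∀ p q : ℤ, x.1 ≤ p → x.2 ≤ q → ¬ NatSeqPartition.memYD lam (p, q) := by
    intro p q h1 h3 hmem
    exact hlx (memYD_mono_col lam (memYD_mono_row lam hmem (by omega) (by omega))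
      (by omega) (by omega))
  refine ⟨⟨hmu _ _ le_rfl (by omega) le_rfl (by omega), ?_⟩,
    ⟨hmu _ _ (by omega) le_rfl (by omega) (by omega), hlam _ _ (by omega) (by omega)⟩,
    ⟨hmu _ _ le_rfl (by omega) (by omega) le_rfl, hlam _ _ (by omega) (by omega)⟩,
    ⟨hmu _ _ (by omega) le_rfl (by omega) le_rfl, hlam _ _ (by omega) (by omega)⟩⟩
  · intro hmem
    exact hlx (by simpa using hmem)

end Wreath

namespace Wreath
attribute [local instance] Classical.propDecidable

lemma part_antitone_int (lam : NatSeqPartition) {q q' : ℤ} (h : q ≤ q') :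
    (lam.part (q' - 1).toNat : ℤ) ≤ (lam.part (q - 1).toNat : ℤ) := by
  exact_mod_cast lam.antitone _ _ (by omega)

lemma not_memYD_iff (lam : NatSeqPartition) {p q : ℤ} (h1 : 1 ≤ p) (h2 : 1 ≤ q) :
    ¬ NatSeqPartition.memYD lam (p, q) ↔ (lam.part (q - 1).toNat : ℤ) < p := by
  unfold NatSeqPartition.memYD
  simp only [h1, h2, true_and]
  omega

lemma neighbor_skew (lam mu : NatSeqPartition) {x y : ℤ × ℤ}
    (hx : SkewMem lam mu x) (hy : SkewMem lam mu y) (hd : y.2 - y.1 = x.2 - x.1 + 1) :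
    SkewMem lam mu (x.1, x.2 + 1) ∨ SkewMem lam mu (x.1 - 1, x.2) := by
  by_contra hcon
  push_neg at hcon
  obtain ⟨hn1, hn2⟩ := hcon
  obtain ⟨⟨hx1, hx2, hx3⟩, hlx⟩ := hx
  obtain ⟨⟨hy1, hy2, hy3⟩, hly⟩ := hy
  have hlxv : (lam.part (x.2 - 1).toNat : ℤ) < x.1 := by
    rw [← not_memYD_iff lam hx1 hx2]
    intro hc
    exact hlx (by simpa using hc)
  -- from hn1 : mu.part at row x.2+1 < x.1
  have hmu1 : (mu.part (x.2 + 1 - 1).toNat : ℤ) < x.1 := by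
    have hnl : ¬ NatSeqPartition.memYD lam (x.1, x.2 + 1) := by
      intro hc
      exact hlx (by simpa using memYD_mono_row lam hc (by omega) (by omega))
    have hnm : ¬ NatSeqPartition.memYD mu (x.1, x.2 + 1) := by
      intro hc; exact hn1 ⟨hc, hnl⟩
    rwa [not_memYD_iff mu hx1 (by omega)] at hnm
  -- lam.part at row x.2 = x.1 - 1
  have hlam1 : x.1 - 1 ≤ (lam.part (x.2 - 1).toNat : ℤ) := by
    by_cases ha : 1 ≤ x.1 - 1
    · have hmm : NatSeqPartition.memYD mu (x.1 - 1, x.2) :=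
        ⟨ha, hx2, by dsimp only; omega⟩
      have : NatSeqPartition.memYD lam (x.1 - 1, x.2) := by
        by_contra hc
        exact hn2 ⟨hmm, hc⟩
      simpa using this.2.2
    · have : (0 : ℤ) ≤ (lam.part (x.2 - 1).toNat : ℤ) := by positivity
      omega
  have hlamb : (lam.part (x.2 - 1).toNat : ℤ) = x.1 - 1 := by omega
  by_cases hb : x.2 + 1 ≤ y.2
  · have h5 := part_antitone_int mu hb
    have hly5 : x.1 ≤ y.1 := by omega
    omega
  · have hb2 : y.2 ≤ x.2 := by omega
    have h5 := part_antitone_int lam hb2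
    have hlyv : (lam.part (y.2 - 1).toNat : ℤ) < y.1 := by
      rw [← not_memYD_iff lam hy1 hy2]
      intro hc
      exact hly (by simpa using hc)
    omega

lemma content_adj {u v : ℤ × ℤ} (h : adjacent u v) :
    v.2 - v.1 = u.2 - u.1 + 1 ∨ u.2 - u.1 = v.2 - v.1 + 1 := by
  rcases h with ⟨h1, h2 | h2⟩ | ⟨h1, h2 | h2⟩ <;> omega

lemma path_content (lam mu : NatSeqPartition) {x y : ℤ × ℤ}
    (h : Relation.ReflTransGen
      (fun u v => SkewMem lam mu u ∧ SkewMem lam mu v ∧ adjacent u v) x y)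
    (hx : SkewMem lam mu x) :
    ∀ e : ℤ, x.2 - x.1 ≤ e → e ≤ y.2 - y.1 → ∃ z, SkewMem lam mu z ∧ z.2 - z.1 = e := by
  induction h with
  | refl => exact fun e h1 h2 => ⟨x, hx, by omega⟩
  | @tail b c h1 h2 ih =>
    intro e he1 he2
    by_cases hcase : e ≤ b.2 - b.1
    · exact ih e he1 hcase
    · rcases content_adj h2.2.2 with hc | hc
      · have : e = c.2 - c.1 := by omega
        exact ⟨c, h2.2.1, by omega⟩
      · omega

end Wreath

namespace Wreath
attribute [local instance] Classical.propDecidable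

noncomputable def Kc (lam mu : NatSeqPartition) (d : ℤ) : ℕ :=
  {x : ℤ × ℤ | SkewMem lam mu x ∧ x.2 - x.1 = d}.ncard

lemma Kc_rec (lam mu : NatSeqPartition) (hsub : Sub lam mu) (d : ℤ) :
    (Kc lam mu d : ℤ) = (Kc lam mu (d + 1) : ℤ)
      + (if mayaFun mu d = 1 then 1 else 0) - (if mayaFun lam d = 1 then 1 else 0) := by
  have h1 := M_add lam mu hsub d
  have h2 := M_add lam mu hsub (d + 1)
  have h3 := M_succ lam d
  have h4 := M_succ mu d
  rw [Kc, Kc] at *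
  split_ifs at * <;> omega

lemma Kc_large (lam mu : NatSeqPartition) (hsub : Sub lam mu) (d : ℤ)
    (h1 : (conj lam 1 : ℤ) ≤ d) (h2 : (conj mu 1 : ℤ) ≤ d) : Kc lam mu d = 0 := by
  have := M_add lam mu hsub d
  rw [M_zero lam d h1, M_zero mu d h2] at this
  rw [Kc]
  omega

lemma K_of_maya (lam mu : NatSeqPartition) (hsub : Sub lam mu) (s : ℕ) (hs : 1 ≤ s) (c : ℤ)
    (h1 : mayaFun lam (c - 1) = 1) (h2 : mayaFun lam (c + (s : ℤ) - 1) = -1)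
    (h3 : mayaFun mu (c - 1) = -1) (h4 : mayaFun mu (c + (s : ℤ) - 1) = 1)
    (h5 : ∀ j : ℤ, j ≠ c - 1 → j ≠ c + (s : ℤ) - 1 → mayaFun mu j = mayaFun lam j) :
    ∀ d : ℤ, (Kc lam mu d : ℤ) = if c ≤ d ∧ d < c + (s : ℤ) then 1 else 0 := by
  set N : ℤ := max (max (conj lam 1) (conj mu 1)) (c + s) with hN
  have hb1 : (conj lam 1 : ℤ) ≤ N := le_trans (le_max_left _ _) (le_max_left _ _)
  have hb2 : (conj mu 1 : ℤ) ≤ N := le_trans (le_max_right _ _) (le_max_left _ _)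
  have hb3 : c + (s : ℤ) ≤ N := le_max_right _ _
  clear_value N
  have key : ∀ k : ℕ, ∀ d : ℤ, N - k ≤ d →
      (Kc lam mu d : ℤ) = if c ≤ d ∧ d < c + (s : ℤ) then 1 else 0 := by
    intro k
    induction k with
    | zero =>
      intro d hd
      simp only [Nat.cast_zero, sub_zero] at hd
      rw [Kc_large lam mu hsub d (by omega) (by omega), if_neg (by omega)]
      norm_num
    | succ k ih =>
      intro d hd
      by_cases hcase : N - k ≤ d
      · exact ih d hcase
      · have hd' : N - k ≤ d + 1 := by push_cast at hd ⊢; omega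
        have hrec := Kc_rec lam mu hsub d
        rw [ih (d + 1) hd'] at hrec
        by_cases hc1 : d = c - 1
        · subst hc1
          split_ifs at hrec ⊢ <;> omega
        · by_cases hc2 : d = c + (s : ℤ) - 1
          · subst hc2
            split_ifs at hrec ⊢ <;> omega
          · have heq := h5 d hc1 hc2
            split_ifs at hrec ⊢ <;> omega
  intro d
  by_cases hdN : N ≤ d
  · exact key 0 d (by push_cast; omega)
  · exact key (N - d).toNat d (by omega)

end Wreath

namespace Wreath
attribute [local instance] Classical.propDecidable

lemma maya_of_K (lam mu : NatSeqPartition) (hsub : Sub lam mu) (s : ℕ) (hs : 1 ≤ s) (c : ℤ)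
    (hK : ∀ d : ℤ, (Kc lam mu d : ℤ) = if c ≤ d ∧ d < c + (s : ℤ) then 1 else 0) :
    mayaFun lam (c - 1) = 1 ∧ mayaFun lam (c + (s : ℤ) - 1) = -1 ∧
      mayaFun mu (c - 1) = -1 ∧ mayaFun mu (c + (s : ℤ) - 1) = 1 ∧
      ∀ j : ℤ, j ≠ c - 1 → j ≠ c + (s : ℤ) - 1 → mayaFun mu j = mayaFun lam j := by
  have step : ∀ j : ℤ, (if c ≤ j ∧ j < c + (s : ℤ) then (1 : ℤ) else 0) =
      (if c ≤ j + 1 ∧ j + 1 < c + (s : ℤ) then (1 : ℤ) else 0)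
        + (if mayaFun mu j = 1 then 1 else 0) - (if mayaFun lam j = 1 then 1 else 0) := by
    intro j
    rw [← hK j, ← hK (j + 1)]
    exact Kc_rec lam mu hsub j
  refine ⟨?_, ?_, ?_, ?_, ?_⟩
  · have e := step (c - 1)
    by_cases hL : mayaFun lam (c - 1) = 1
    · exact hL
    · rw [if_neg hL] at e
      split_ifs at e <;> omega
  · have e := step (c + (s : ℤ) - 1)
    by_cases hL : mayaFun lam (c + (s : ℤ) - 1) = 1
    · rw [if_pos hL] at e
      split_ifs at e <;> omega
    · exact (maya_cases lam _).resolve_left hL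
  · have e := step (c - 1)
    by_cases hU : mayaFun mu (c - 1) = 1
    · rw [if_pos hU] at e
      split_ifs at e <;> omega
    · exact (maya_cases mu _).resolve_left hU
  · have e := step (c + (s : ℤ) - 1)
    by_cases hU : mayaFun mu (c + (s : ℤ) - 1) = 1
    · exact hU
    · rw [if_neg hU] at e
      split_ifs at e <;> omega
  · intro j hj1 hj2
    have e := step j
    by_cases hL : mayaFun lam j = 1 <;> by_cases hU : mayaFun mu j = 1
    · rw [hL, hU]
    · rw [if_pos hL, if_neg hU] at e
      split_ifs at e <;> omega
    · rw [if_neg hL, if_pos hU] at e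
      split_ifs at e <;> omega
    · rw [(maya_cases lam _).resolve_left hL, (maya_cases mu _).resolve_left hU]

end Wreath

namespace Wreath
attribute [local instance] Classical.propDecidable

section KStruct
variable (lam mu : NatSeqPartition) (s : ℕ) (c : ℤ)

lemma Kfin (d : ℤ) : {x : ℤ × ℤ | SkewMem lam mu x ∧ x.2 - x.1 = d}.Finite :=
  (skew_finite lam mu).subset (fun x hx => hx.1)

variable {lam mu s c}
variable (hK : ∀ d : ℤ, (Kc lam mu d : ℤ) = if c ≤ d ∧ d < c + (s : ℤ) then 1 else 0)
include hK

lemma K_uniq : ∀ x y, SkewMem lam mu x → SkewMem lam mu y →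
    x.2 - x.1 = y.2 - y.1 → x = y := by
  intro x y hx hy hd
  have h1 : Kc lam mu (x.2 - x.1) ≤ 1 := by
    have := hK (x.2 - x.1)
    split_ifs at this <;> omega
  exact (Set.ncard_le_one (Kfin lam mu (x.2 - x.1))).mp h1 x ⟨hx, rfl⟩ y ⟨hy, hd.symm⟩

lemma K_ex : ∀ d : ℤ, c ≤ d → d < c + (s : ℤ) → ∃ x, SkewMem lam mu x ∧ x.2 - x.1 = d := by
  intro d h1 h2
  have := hK d
  rw [if_pos ⟨h1, h2⟩] at this
  have h3 : Kc lam mu d ≠ 0 := by omega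
  obtain ⟨x, hx⟩ := Set.nonempty_of_ncard_ne_zero h3
  exact ⟨x, hx⟩

lemma K_range : ∀ x, SkewMem lam mu x → c ≤ x.2 - x.1 ∧ x.2 - x.1 < c + (s : ℤ) := by
  intro x hx
  by_contra hc
  have := hK (x.2 - x.1)
  rw [if_neg hc] at this
  have h0 : Kc lam mu (x.2 - x.1) = 0 := by omega
  rw [Kc, Set.ncard_eq_zero (Kfin lam mu _)] at h0
  have hmem : x ∈ {z : ℤ × ℤ | SkewMem lam mu z ∧ z.2 - z.1 = x.2 - x.1} := ⟨hx, rfl⟩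
  rw [h0] at hmem
  exact hmem

lemma K_chain : ∀ n : ℕ, ∀ x y, SkewMem lam mu x → SkewMem lam mu y →
    y.2 - y.1 - (x.2 - x.1) = n →
    Relation.ReflTransGen (fun u v => SkewMem lam mu u ∧ SkewMem lam mu v ∧ adjacent u v) x y := by
  intro n
  induction n with
  | zero =>
    intro x y hx hy hd
    rw [K_uniq hK x y hx hy (by omega)]
  | succ n ih =>
    intro x y hx hy hd
    have hry := K_range hK y hy
    have hrx := K_range hK x hx
    obtain ⟨w, hw, hwd⟩ := K_ex hK (x.2 - x.1 + 1) (by omega) (by omega)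
    have hnb := neighbor_skew lam mu hx hw (by omega)
    rcases hnb with hz | hz
    · refine Relation.ReflTransGen.head ⟨hx, hz, ?_⟩ (ih _ y hz hy (by simp; omega))
      left
      constructor <;> simp
    · refine Relation.ReflTransGen.head ⟨hx, hz, ?_⟩ (ih _ y hz hy (by simp; omega))
      right
      constructor <;> simp

lemma K_conn : ∀ x y, SkewMem lam mu x → SkewMem lam mu y →
    Relation.ReflTransGen (fun u v => SkewMem lam mu u ∧ SkewMem lam mu v ∧ adjacent u v) x y := by
  intro x y hx hy
  by_cases h : x.2 - x.1 ≤ y.2 - y.1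
  · exact K_chain hK (y.2 - y.1 - (x.2 - x.1)).toNat x y hx hy (by omega)
  · have hsymm : Symmetric (fun u v => SkewMem lam mu u ∧ SkewMem lam mu v ∧ adjacent u v) := by
      rintro u v ⟨h1, h2, h3⟩
      refine ⟨h2, h1, ?_⟩
      unfold adjacent at h3 ⊢
      tauto
    exact (@Relation.ReflTransGen.symmetric _ _ ⟨fun a b h => hsymm h⟩).symm _ _ (K_chain hK (x.2 - x.1 - (y.2 - y.1)).toNat
      y x hy hx (by omega))

lemma K_bs (hsub : Sub lam mu) (hs : 1 ≤ s) : IsBorderStrip lam mu := by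
  refine ⟨hsub, ?_, K_conn hK, ?_⟩
  · obtain ⟨x, hx, _⟩ := K_ex hK c le_rfl (by omega)
    exact ⟨x, hx⟩
  · rintro ⟨a, b, h1, h2, h3, h4⟩
    have := K_uniq hK (a, b) (a + 1, b + 1) h1 h4 (by simp)
    simp only [Prod.mk.injEq] at this
    omega

lemma K_size (hs : 1 ≤ s) : skewSize lam mu = s := by
  have himg : (fun x : ℤ × ℤ => x.2 - x.1) '' {x | SkewMem lam mu x} = Set.Icc c (c + s - 1) := by
    ext d
    simp only [Set.mem_image, Set.mem_setOf_eq, Set.mem_Icc]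
    constructor
    · rintro ⟨x, hx, rfl⟩
      have := K_range hK x hx
      omega
    · intro hd
      obtain ⟨x, hx, hxd⟩ := K_ex hK d hd.1 (by omega)
      exact ⟨x, hx, hxd⟩
  have hinj : Set.InjOn (fun x : ℤ × ℤ => x.2 - x.1) {x | SkewMem lam mu x} := by
    intro x hx y hy hxy
    exact K_uniq hK x y hx hy hxy
  have := Set.ncard_image_of_injOn hinj
  rw [himg] at this
  rw [skewSize, ← this, ← Finset.coe_Icc, Set.ncard_coe_finset, Int.card_Icc]
  omega

end KStruct
end Wreath

namespace Wreath
attribute [local instance] Classical.propDecidable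

lemma bs_to_K (lam mu : NatSeqPartition) (hbs : IsBorderStrip lam mu) (s : ℕ)
    (hsz : skewSize lam mu = s) :
    ∃ c : ℤ, ∀ d : ℤ, (Kc lam mu d : ℤ) = if c ≤ d ∧ d < c + (s : ℤ) then 1 else 0 := by
  obtain ⟨hsub, ⟨x0, hx0⟩, hconn, h2x2⟩ := hbs
  have huniq : ∀ x y, SkewMem lam mu x → SkewMem lam mu y → x.2 - x.1 = y.2 - y.1 → x = y := by
    intro x y hx hy hd
    by_contra hne
    have hne1 : x.1 ≠ y.1 := by
      intro h
      exact hne (Prod.ext h (by omega))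
    rcases lt_or_gt_of_ne hne1 with hlt | hgt
    · obtain ⟨r1, r2, r3, r4⟩ := rect_lemma lam mu hx hy hd hlt
      exact h2x2 ⟨x.1, x.2, r1, r2, r3, r4⟩
    · obtain ⟨r1, r2, r3, r4⟩ := rect_lemma lam mu hy hx hd.symm hgt
      exact h2x2 ⟨y.1, y.2, r1, r2, r3, r4⟩
  set F : Finset ℤ := (skew_finite lam mu).toFinset.image (fun x => x.2 - x.1) with hF
  have hFne : F.Nonempty := ⟨x0.2 - x0.1, by
    rw [hF, Finset.mem_image]
    exact ⟨x0, by rw [Set.Finite.mem_toFinset]; exact hx0, rfl⟩⟩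
  set c := F.min' hFne with hc
  set cm := F.max' hFne with hcm
  have hmemF : ∀ x, SkewMem lam mu x → x.2 - x.1 ∈ F := by
    intro x hx
    rw [hF, Finset.mem_image]
    exact ⟨x, by rw [Set.Finite.mem_toFinset]; exact hx, rfl⟩
  have hrange : ∀ x, SkewMem lam mu x → c ≤ x.2 - x.1 ∧ x.2 - x.1 ≤ cm := by
    intro x hx
    exact ⟨F.min'_le _ (hmemF x hx), F.le_max' _ (hmemF x hx)⟩
  have hexd : ∀ d, c ≤ d → d ≤ cm → ∃ x, SkewMem lam mu x ∧ x.2 - x.1 = d := by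
    intro d h1 h2
    have hcmem : c ∈ F := F.min'_mem hFne
    rw [hF] at hcmem
    obtain ⟨xlo, hxlo, hlo⟩ := Finset.mem_image.mp hcmem
    rw [Set.Finite.mem_toFinset] at hxlo
    have hmmem : cm ∈ F := F.max'_mem hFne
    rw [hF] at hmmem
    obtain ⟨xhi, hxhi, hhi⟩ := Finset.mem_image.mp hmmem
    rw [Set.Finite.mem_toFinset] at hxhi
    exact path_content lam mu (hconn xlo xhi hxlo hxhi) hxlo d (by omega) (by omega)
  have himg : (fun x : ℤ × ℤ => x.2 - x.1) '' {x | SkewMem lam mu x} = Set.Icc c cm := by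
    ext d
    simp only [Set.mem_image, Set.mem_setOf_eq, Set.mem_Icc]
    constructor
    · rintro ⟨x, hx, rfl⟩
      exact hrange x hx
    · intro hd
      exact hexd d hd.1 hd.2
  have hinj : Set.InjOn (fun x : ℤ × ℤ => x.2 - x.1) {x | SkewMem lam mu x} :=
    fun x hx y hy h => huniq x y hx hy h
  have hsize : s = (cm + 1 - c).toNat := by
    have h1 := Set.ncard_image_of_injOn hinj
    rw [himg] at h1
    rw [← hsz, skewSize, ← h1, ← Finset.coe_Icc, Set.ncard_coe_finset, Int.card_Icc]
  have hcc : c ≤ cm := F.min'_le _ (F.max'_mem hFne)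
  have hcm_eq : cm = c + (s : ℤ) - 1 := by omega
  refine ⟨c, fun d => ?_⟩
  by_cases hd : c ≤ d ∧ d < c + (s : ℤ)
  · rw [if_pos hd]
    obtain ⟨x, hx⟩ := hexd d hd.1 (by omega)
    have : {z : ℤ × ℤ | SkewMem lam mu z ∧ z.2 - z.1 = d} = {x} := by
      ext z
      simp only [Set.mem_setOf_eq, Set.mem_singleton_iff]
      constructor
      · rintro ⟨hz1, hz2⟩
        exact huniq z x hz1 hx.1 (by omega)
      · rintro rfl
        exact hx
    rw [Kc, this, Set.ncard_singleton]
    norm_num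
  · rw [if_neg hd]
    have : {z : ℤ × ℤ | SkewMem lam mu z ∧ z.2 - z.1 = d} = ∅ := by
      ext z
      simp only [Set.mem_setOf_eq, Set.mem_empty_iff_false, iff_false, not_and]
      intro hz1 hz2
      have := hrange z hz1
      omega
    rw [Kc, this, Set.ncard_empty]
    norm_num

end Wreath

open Wreath

theorem border_strip_maya (lam mu : NatSeqPartition) (hsub : Sub lam mu) (s : ℕ) (hs : 1 ≤ s) :
    ((IsBorderStrip lam mu ∧ skewSize lam mu = s) ↔
      ∃ c : ℤ, mayaFun lam (c - 1) = 1 ∧ mayaFun lam (c + (s : ℤ) - 1) = -1 ∧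
        mayaFun mu (c - 1) = -1 ∧ mayaFun mu (c + (s : ℤ) - 1) = 1 ∧
        ∀ j : ℤ, j ≠ c - 1 → j ≠ c + (s : ℤ) - 1 → mayaFun mu j = mayaFun lam j) ∧
    (∀ c : ℤ,
      (mayaFun lam (c - 1) = 1 ∧ mayaFun lam (c + (s : ℤ) - 1) = -1 ∧
        mayaFun mu (c - 1) = -1 ∧ mayaFun mu (c + (s : ℤ) - 1) = 1 ∧
        ∀ j : ℤ, j ≠ c - 1 → j ≠ c + (s : ℤ) - 1 → mayaFun mu j = mayaFun lam j) →
      (∀ d : ℤ, (c ≤ d ∧ d < c + (s : ℤ)) ↔ ∃ x, SkewMem lam mu x ∧ x.2 - x.1 = d) ∧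
      (∀ x y, SkewMem lam mu x → SkewMem lam mu y → x.2 - x.1 = y.2 - y.1 → x = y)) := by
  have hmain : ∀ c : ℤ,
      (mayaFun lam (c - 1) = 1 ∧ mayaFun lam (c + (s : ℤ) - 1) = -1 ∧
        mayaFun mu (c - 1) = -1 ∧ mayaFun mu (c + (s : ℤ) - 1) = 1 ∧
        ∀ j : ℤ, j ≠ c - 1 → j ≠ c + (s : ℤ) - 1 → mayaFun mu j = mayaFun lam j) →
      ∀ d : ℤ, (Kc lam mu d : ℤ) = if c ≤ d ∧ d < c + (s : ℤ) then 1 else 0 := by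
    rintro c ⟨h1, h2, h3, h4, h5⟩
    exact K_of_maya lam mu hsub s hs c h1 h2 h3 h4 h5
  constructor
  · constructor
    · rintro ⟨hbs, hsz⟩
      obtain ⟨c, hK⟩ := bs_to_K lam mu hbs s hsz
      exact ⟨c, maya_of_K lam mu hsub s hs c hK⟩
    · rintro ⟨c, hc⟩
      have hK := hmain c hc
      exact ⟨K_bs hK hsub hs, K_size hK hs⟩
  · intro c hc
    have hK := hmain c hc
    refine ⟨fun d => ⟨fun hd => ?_, fun ⟨x, hx, hxd⟩ => ?_⟩, K_uniq hK⟩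
    · obtain ⟨x, hx, hxd⟩ := K_ex hK d hd.1 hd.2
      exact ⟨x, hx, hxd⟩
    · have := K_range hK x hx
      omega
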